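/- Let m > 0, n ≥ 1, and let c(n,P) ∈ [0,1) solve c = (|P|-c)/sqrt(m²n²+(|P|-c)²). Then the partial derivative of c(n,P) with respect to n equals −(1/n)(|P| − c(n,P)) · (1 + (m²n² + (|P|−c(n,P))²)^{3/2} / (m²n²))^{-1}. -/

import Mathlib

/-- Formula for the partial derivative with respect to `n` of the solution
`c(n,P) ∈ [0,1)` of `c = (|P|-c)/sqrt(m²n²+(|P|-c)²)`:
`∂ₙc = −(1/n)(|P|−c)·(1 + (m²n²+(|P|−c)²)^{3/2}/(m²n²))⁻¹`. -/
theorem deriv_c_in_n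
    (d : ℕ) (m : ℝ) (hm : 0 < m) (n : ℝ) (hn : 1 ≤ n)
    (P : EuclideanSpace ℝ (Fin d)) (hP : P ≠ 0)
    (c : ℝ → ℝ) (c' : ℝ)
    (hc : ∀ r : ℝ, 0 < r → c r ∈ Set.Ico (0 : ℝ) 1 ∧
      c r = (‖P‖ - c r) / Real.sqrt (m ^ 2 * r ^ 2 + (‖P‖ - c r) ^ 2))
    (hderiv : HasDerivAt c c' n) :
    c' = -(1 / n) * (‖P‖ - c n) *
      (1 + (m ^ 2 * n ^ 2 + (‖P‖ - c n) ^ 2) ^ ((3 : ℝ) / 2) / (m ^ 2 * n ^ 2))⁻¹ := by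
  have hn0 : (0:ℝ) < n := by linarith
  obtain ⟨hmem, heq⟩ := hc n hn0
  have hP0 : (0:ℝ) < ‖P‖ := norm_pos_iff.mpr hP
  set y := c n with hy
  set s := ‖P‖ - y with hsdef
  have hA : (0:ℝ) < m ^ 2 * n ^ 2 + s ^ 2 := by positivity
  have hsqrt : 0 < Real.sqrt (m ^ 2 * n ^ 2 + s ^ 2) := Real.sqrt_pos.mpr hA
  have hy0 : 0 ≤ y := hmem.1
  have hy1 : y < 1 := hmem.2
  have hs0 : 0 < s := by
    rcases lt_or_ge 0 s with h | h
    · exact h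
    · have hyle : y ≤ 0 := by
        rw [heq]
        exact div_nonpos_of_nonpos_of_nonneg h hsqrt.le
      have : y = 0 := le_antisymm hyle hy0
      rw [hsdef, this] at h
      linarith
  have hypos : 0 < y := by
    rw [heq]; exact div_pos hs0 hsqrt
  -- squared identity at n
  have hmul : y * Real.sqrt (m ^ 2 * n ^ 2 + s ^ 2) = s := by
    rw [heq]; field_simp
  have key : y ^ 2 * (m ^ 2 * n ^ 2 + s ^ 2) = s ^ 2 := by
    have := congrArg (· ^ 2) hmul
    simpa [mul_pow, Real.sq_sqrt hA.le] using this
  -- g vanishes near n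
  have hgz : (fun r => (‖P‖ - c r) ^ 2 * (1 - (c r) ^ 2) - (c r) ^ 2 * (m ^ 2 * r ^ 2))
      =ᶠ[nhds n] (fun _ => (0:ℝ)) := by
    filter_upwards [Ioi_mem_nhds hn0] with r hr
    obtain ⟨hm', he⟩ := hc r hr
    have hr' : 0 < r := hr
    have hAr : (0:ℝ) < m ^ 2 * r ^ 2 + (‖P‖ - c r) ^ 2 := by positivity
    have hsr : 0 < Real.sqrt (m ^ 2 * r ^ 2 + (‖P‖ - c r) ^ 2) := Real.sqrt_pos.mpr hAr
    have hmr : c r * Real.sqrt (m ^ 2 * r ^ 2 + (‖P‖ - c r) ^ 2) = ‖P‖ - c r := by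
      nth_rewrite 1 [he]
      exact div_mul_cancel₀ _ hsr.ne'
    have hsq : (c r) ^ 2 * (m ^ 2 * r ^ 2 + (‖P‖ - c r) ^ 2) = (‖P‖ - c r) ^ 2 := by
      have := congrArg (· ^ 2) hmr
      simpa [mul_pow, Real.sq_sqrt hAr.le] using this
    linear_combination -hsq
  -- derivative of g
  have h1 : HasDerivAt (fun r => (‖P‖ - c r) ^ 2)
      (2 * (‖P‖ - c n) ^ 1 * (-c')) n := by
    exact (((hasDerivAt_const n ‖P‖).sub hderiv).pow 2).congr_deriv (by norm_num)
  have h2 : HasDerivAt (fun r => 1 - (c r) ^ 2) (-(2 * (c n) ^ 1 * c')) n := by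
    exact ((hasDerivAt_const n (1:ℝ)).sub (hderiv.pow 2)).congr_deriv (by norm_num)
  have h3 : HasDerivAt (fun r => (c r) ^ 2) (2 * (c n) ^ 1 * c') n := hderiv.pow 2
  have h4 : HasDerivAt (fun r : ℝ => m ^ 2 * r ^ 2) (m ^ 2 * (2 * n ^ 1)) n := by
    simpa using (hasDerivAt_pow 2 n).const_mul (m ^ 2)
  have hg : HasDerivAt (fun r => (‖P‖ - c r) ^ 2 * (1 - (c r) ^ 2) - (c r) ^ 2 * (m ^ 2 * r ^ 2))
      ((2 * (‖P‖ - c n) ^ 1 * (-c')) * (1 - (c n) ^ 2)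
        + (‖P‖ - c n) ^ 2 * (-(2 * (c n) ^ 1 * c'))
        - ((2 * (c n) ^ 1 * c') * (m ^ 2 * n ^ 2) + (c n) ^ 2 * (m ^ 2 * (2 * n ^ 1)))) n :=
    (h1.mul h2).sub (h3.mul h4)
  have hG0 : (2 * (‖P‖ - c n) ^ 1 * (-c')) * (1 - (c n) ^ 2)
        + (‖P‖ - c n) ^ 2 * (-(2 * (c n) ^ 1 * c'))
        - ((2 * (c n) ^ 1 * c') * (m ^ 2 * n ^ 2) + (c n) ^ 2 * (m ^ 2 * (2 * n ^ 1))) = 0 :=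
    (hg.congr_of_eventuallyEq hgz.symm).unique (hasDerivAt_const n (0:ℝ))
  -- solve for c'
  have hD : 0 < s * (1 - y ^ 2) + y * s ^ 2 + y * (m ^ 2 * n ^ 2) := by
    have : 0 < 1 - y ^ 2 := by nlinarith
    positivity
  have hc' : c' = -(y ^ 2 * m ^ 2 * n) / (s * (1 - y ^ 2) + y * s ^ 2 + y * (m ^ 2 * n ^ 2)) := by
    rw [eq_div_iff hD.ne']
    simp only [pow_one, ← hy, ← hsdef] at hG0
    linear_combination (-1/2 : ℝ) * hG0
  -- rpow
  have hsqv : Real.sqrt (m ^ 2 * n ^ 2 + s ^ 2) = s / y := by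
    field_simp [hypos.ne'] at hmul ⊢
    linarith [hmul]
  have hA32 : (m ^ 2 * n ^ 2 + s ^ 2) ^ ((3:ℝ)/2) = (s / y) ^ 3 := by
    rw [← hsqv, Real.sqrt_eq_rpow, ← Real.rpow_natCast ((m ^ 2 * n ^ 2 + s ^ 2) ^ ((1:ℝ)/2)) 3,
      ← Real.rpow_mul hA.le]
    norm_num
  rw [hc', hA32]
  have h1y : 0 < 1 - y ^ 2 := by nlinarith
  field_simp
  linear_combination (s - y) * key
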